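/- Let λ be a partition with two parts, μ a content vector with |μ| = |λ|, α defined by αᵢ = Σ_{j>i} μⱼ, and ν by νᵢ = αᵢ + μᵢ (ν_ℓ = μ_ℓ). For any semistandard tableau T of shape λ and content μ with entries in {1,…,ℓ}, the skew filling S(T) of λ*α, obtained by placing T on the λ-part and filling the i-th row of the α-part entirely with i's, is a Littlewood-Richardson skew tableau of content ν. -/

import Mathlib

open Finset

/-- The two-row Young diagram with row lengths `l1` (top) and `l2` (bottom).
In intended uses `l2 ≤ l1`. -/
def twoRow (l1 l2 : ℕ) : YoungDiagram :=
  YoungDiagram.ofRowLens [max l1 l2, l2] (by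
    simp [List.sortedGE_iff_pairwise, le_max_right])

/-- The number of cells of `T` with entry `v` (entries are 0-indexed). -/
def content {sh : YoungDiagram} (T : SemistandardYoungTableau sh) (v : ℕ) : ℕ :=
  (sh.cells.filter fun c => T c.1 c.2 = v).card

/-- Kostka number: the number of semistandard Young tableaux of shape `sh`
with content `c` (entries 0-indexed: `c v` copies of entry `v`). -/
noncomputable def kostka (sh : YoungDiagram) (c : ℕ → ℕ) : ℕ :=
  Nat.card {T : SemistandardYoungTableau sh // ∀ v, content T v = c v}

/-- A skew semistandard tableau on the skew shape whose `i`-th row occupies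
columns `[lo i, lo i + len i)`: rows weakly increase, columns strictly increase,
entries vanish off the shape. -/
structure SkewTab (lo len : ℕ → ℕ) where
  entry : ℕ → ℕ → ℕ
  rowWeak : ∀ i j1 j2, lo i ≤ j1 → j1 ≤ j2 → j2 < lo i + len i → entry i j1 ≤ entry i j2
  colStrict : ∀ i j, lo i ≤ j → j < lo i + len i → lo (i + 1) ≤ j →
    j < lo (i + 1) + len (i + 1) → entry i j < entry (i + 1) j
  zeros : ∀ i j, ¬(lo i ≤ j ∧ j < lo i + len i) → entry i j = 0

/-- The reading word: each row read right to left, rows top to bottom. -/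
def readWord (lo len : ℕ → ℕ) (rows : ℕ) (T : SkewTab lo len) : List ℕ :=
  (List.range rows).flatMap fun i =>
    (List.range (len i)).reverse.map fun t => T.entry i (lo i + t)

/-- A word is a lattice word: every prefix has at least as many `v`'s as `(v+1)`'s. -/
def IsLattice (w : List ℕ) : Prop := ∀ n v, (w.take n).count (v + 1) ≤ (w.take n).count v

/-- Number of copies of `v` in row `i` of the skew tableau `T`. -/
def rowContent (lo len : ℕ → ℕ) (T : SkewTab lo len) (i v : ℕ) : ℕ :=
  ((Finset.Ico (lo i) (lo i + len i)).filter fun j => T.entry i j = v).card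

/-- Total number of copies of `v` in the skew tableau `T` (with `rows` rows). -/
def skewContent (lo len : ℕ → ℕ) (rows : ℕ) (T : SkewTab lo len) (v : ℕ) : ℕ :=
  ∑ i ∈ Finset.range rows, rowContent lo len T i v

/-- Left endpoints of the rows of the skew shape `λ*α` where `λ = (l1, l2)` and
`α` has `m` rows: the `m` rows of `α` start at column `l1`, the two rows of `λ` at column 0. -/
def starLo (l1 m : ℕ) (i : ℕ) : ℕ := if i < m then l1 else 0

/-- Row lengths of the skew shape `λ*α`, `λ = (l1, l2)`, `α` with `m` rows. -/
def starLen (l1 l2 : ℕ) (a : ℕ → ℕ) (m : ℕ) (i : ℕ) : ℕ :=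
  if i < m then a i else if i = m then l1 else if i = m + 1 then l2 else 0

/- ----------------- auxiliary lemmas ----------------- -/

lemma lr_count_flatMap (f : ℕ → List ℕ) (N v : ℕ) :
    ((List.range N).flatMap f).count v = ∑ i ∈ Finset.range N, (f i).count v := by
  induction N with
  | zero => simp
  | succ N ih => rw [List.range_succ, List.flatMap_append, List.count_append, ih,
      Finset.sum_range_succ]; simp

lemma lr_take_flatMap (f : ℕ → List ℕ) (N n : ℕ) :
    ∃ i, i ≤ N ∧ ∃ k, k ≤ (f i).length ∧
      ((List.range N).flatMap f).take n = ((List.range i).flatMap f) ++ (f i).take k := by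
  induction N with
  | zero => exact ⟨0, le_rfl, 0, Nat.zero_le _, by simp⟩
  | succ N ih =>
    rw [List.range_succ, List.flatMap_append, List.take_append]
    set A := (List.range N).flatMap f with hA
    by_cases h : n ≤ A.length
    · obtain ⟨i, hi, k, hk, heq⟩ := ih
      refine ⟨i, hi.trans (Nat.le_succ _), k, hk, ?_⟩
      simp [Nat.sub_eq_zero_of_le h, heq]
    · refine ⟨N, Nat.le_succ _, min (n - A.length) (f N).length, min_le_right _ _, ?_⟩
      rw [List.take_of_length_le (le_of_not_ge h), List.flatMap_singleton]
      congr 1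
      rw [← List.take_take, List.take_length]

lemma lr_count_row (g : ℕ → ℕ) (n v : ℕ) :
    (((List.range n).reverse.map g).count v) = ((Finset.range n).filter (fun t => g t = v)).card := by
  rw [List.count_eq_countP, List.countP_map, List.countP_reverse, Finset.card_filter]
  induction n with
  | zero => simp
  | succ n ih => rw [List.range_succ, List.countP_append, Finset.sum_range_succ, ih]
                 simp [List.countP_cons]

lemma mem_twoRow (l1 l2 : ℕ) (hl : l2 ≤ l1) (i j : ℕ) :
    (i, j) ∈ twoRow l1 l2 ↔ (i = 0 ∧ j < l1) ∨ (i = 1 ∧ j < l2) := by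
  have hmax : max l1 l2 = l1 := max_eq_left hl
  match i with
  | 0 => simp [twoRow, YoungDiagram.mem_ofRowLens, hmax]
  | 1 => simp [twoRow, YoungDiagram.mem_ofRowLens, hmax]
  | (n+2) => simp [twoRow, YoungDiagram.mem_ofRowLens]

lemma twoRow_cells (l1 l2 : ℕ) (hl : l2 ≤ l1) :
    (twoRow l1 l2).cells =
      ((Finset.range l1).map ⟨fun j => ((0 : ℕ), j), fun _ _ h => by simpa using h⟩) ∪
      ((Finset.range l2).map ⟨fun j => ((1 : ℕ), j), fun _ _ h => by simpa using h⟩) := by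
  ext ⟨i, j⟩
  simp only [YoungDiagram.mem_cells, mem_twoRow l1 l2 hl, Finset.mem_union, Finset.mem_map,
    Function.Embedding.coeFn_mk, Finset.mem_range, Prod.mk.injEq]
  constructor
  · rintro (⟨rfl, h⟩ | ⟨rfl, h⟩)
    · exact Or.inl ⟨j, h, rfl⟩
    · exact Or.inr ⟨j, h, rfl⟩
  · rintro (⟨t, h, rfl, rfl⟩ | ⟨t, h, rfl, rfl⟩) <;> simp [h]

lemma content_twoRow (l1 l2 : ℕ) (hl : l2 ≤ l1) (T : SemistandardYoungTableau (twoRow l1 l2))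
    (v : ℕ) : content T v =
      ((Finset.range l1).filter fun j => T 0 j = v).card +
      ((Finset.range l2).filter fun j => T 1 j = v).card := by
  rw [content, twoRow_cells l1 l2 hl, Finset.filter_union,
    Finset.card_union_of_disjoint, Finset.filter_map, Finset.filter_map,
    Finset.card_map, Finset.card_map]
  · rfl
  · apply Finset.disjoint_filter_filter
    simp only [Finset.disjoint_left, Finset.mem_map, Function.Embedding.coeFn_mk]
    rintro ⟨i, j⟩ ⟨t, _, h⟩ ⟨s, _, h'⟩
    rw [← h] at h'
    change ((1 : ℕ), s) = ((0 : ℕ), t) at h'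
    simp at h'

theorem stmt8 (l1 l2 L : ℕ) (hl : l2 ≤ l1) (hL : 1 ≤ L) (mu : ℕ → ℕ)
    (hmu : ∀ i, L ≤ i → mu i = 0) (hsum : l1 + l2 = ∑ j ∈ Finset.range L, mu j)
    (T : SemistandardYoungTableau (twoRow l1 l2)) (hT : ∀ v, content T v = mu v) :
    ∃ S : SkewTab (starLo l1 (L - 1)) (starLen l1 l2 (fun i => ∑ w ∈ Finset.Ico (i + 1) L, mu w) (L - 1)),
      (∀ i j, starLo l1 (L - 1) i ≤ j →
          j < starLo l1 (L - 1) i + starLen l1 l2 (fun i => ∑ w ∈ Finset.Ico (i + 1) L, mu w) (L - 1) i →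
          S.entry i j = if i < L - 1 then i else T (i - (L - 1)) j) ∧
      IsLattice (readWord (starLo l1 (L - 1)) (starLen l1 l2 (fun i => ∑ w ∈ Finset.Ico (i + 1) L, mu w) (L - 1)) (L + 1) S) ∧
      (∀ v, skewContent (starLo l1 (L - 1)) (starLen l1 l2 (fun i => ∑ w ∈ Finset.Ico (i + 1) L, mu w) (L - 1)) (L + 1) S v =
        ∑ w ∈ Finset.Ico v L, mu w) := by
  classical
  set m := L - 1 with hm
  set A : ℕ → ℕ := fun i => ∑ w ∈ Finset.Ico (i + 1) L, mu w with hA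
  -- basic facts
  have hAstep : ∀ u, A u = mu (u + 1) + A (u + 1) := by
    intro u
    by_cases h : u + 1 < L
    · rw [hA]
      simp only
      rw [Finset.sum_eq_sum_Ico_succ_bot h]
    · have h1 : Finset.Ico (u + 1) L = ∅ := Finset.Ico_eq_empty (by omega)
      have h2 : Finset.Ico (u + 2) L = ∅ := Finset.Ico_eq_empty (by omega)
      simp [hA, h1, h2, hmu (u + 1) (by omega)]
  have hAzero : ∀ u, m ≤ u → A u = 0 := by
    intro u hu
    have : Finset.Ico (u + 1) L = ∅ := Finset.Ico_eq_empty (by omega)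
    simp [hA, this]
  -- row counts of T
  set r0 : ℕ → ℕ := fun v => ((Finset.range l1).filter fun j => T 0 j = v).card with hr0
  set r1 : ℕ → ℕ := fun v => ((Finset.range l2).filter fun j => T 1 j = v).card with hr1
  have hcont : ∀ v, mu v = r0 v + r1 v := by
    intro v; rw [← hT v, content_twoRow l1 l2 hl T v]
  -- zero rows of T
  have hz0 : ∀ j, l1 ≤ j → T 0 j = 0 := by
    intro j hj; apply T.zeros; rw [mem_twoRow l1 l2 hl]; omega
  have hz1 : ∀ j, l2 ≤ j → T 1 j = 0 := by
    intro j hj; apply T.zeros; rw [mem_twoRow l1 l2 hl]; omega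
  have hz2 : ∀ i j, 2 ≤ i → T i j = 0 := by
    intro i j hi; apply T.zeros; rw [mem_twoRow l1 l2 hl]; omega
  -- the entry function
  set E : ℕ → ℕ → ℕ := fun i j =>
    if i < m then (if l1 ≤ j ∧ j < l1 + A i then i else 0) else T (i - m) j with hE
  have hlo : ∀ i, starLo l1 m i = if i < m then l1 else 0 := fun i => rfl
  have hlen : ∀ i, starLen l1 l2 A m i =
      if i < m then A i else if i = m then l1 else if i = m + 1 then l2 else 0 := fun i => rfl
  have hlenm : starLen l1 l2 A m m = l1 := by rw [hlen]; simp
  have hlenm1 : starLen l1 l2 A m (m + 1) = l2 := by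
    rw [hlen, if_neg (show ¬ (m + 1 < m) by omega), if_neg (show ¬ (m + 1 = m) by omega),
      if_pos rfl]
  have hlom : starLo l1 m m = 0 := by rw [hlo]; simp
  have hlom1 : starLo l1 m (m + 1) = 0 := by rw [hlo, if_neg (by omega)]
  refine ⟨⟨E, ?_, ?_, ?_⟩, ?_, ?_, ?_⟩
  · -- rowWeak
    intro i j1 j2 h1 h2 h3
    rw [hlo] at h1; rw [hlo, hlen] at h3
    show E i j1 ≤ E i j2
    simp only [hE]
    split_ifs at h1 h3 with hi him him1
    · -- i < m
      simp only [hi, if_pos]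
      rw [if_pos (show l1 ≤ j1 ∧ j1 < l1 + A i by omega),
        if_pos (show l1 ≤ j2 ∧ j2 < l1 + A i by omega)]
    · -- i = m
      simp only [hi, if_neg, if_false]
      subst him
      rw [Nat.sub_self]
      rcases eq_or_lt_of_le h2 with rfl | hlt
      · exact le_rfl
      · exact T.row_weak hlt (by rw [mem_twoRow l1 l2 hl]; left; exact ⟨rfl, by omega⟩)
    · -- i = m + 1
      simp only [hi, if_neg, if_false]
      have h4 : i - m = 1 := by omega
      rw [h4]
      rcases eq_or_lt_of_le h2 with rfl | hlt
      · exact le_rfl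
      · exact T.row_weak hlt (by rw [mem_twoRow l1 l2 hl]; right; exact ⟨rfl, by omega⟩)
    · -- empty row
      exact absurd h3 (by omega)
  · -- colStrict
    intro i j h1 h2 h3 h4
    rw [hlo] at h1 h3; rw [hlo, hlen] at h2 h4
    show E i j < E (i + 1) j
    simp only [hE]
    by_cases hi1 : i + 1 < m
    · have hi : i < m := by omega
      simp only [if_pos hi] at h1 h2
      simp only [if_pos hi1] at h3 h4
      rw [if_pos hi, if_pos hi1,
        if_pos (show l1 ≤ j ∧ j < l1 + A i from ⟨h1, h2⟩),
        if_pos (show l1 ≤ j ∧ j < l1 + A (i + 1) from ⟨h3, h4⟩)]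
      omega
    · by_cases hi : i < m
      · -- i + 1 = m : disjoint columns, contradiction
        have h5 : i + 1 = m := by omega
        simp only [if_pos hi] at h1
        simp only [if_neg hi1, if_pos h5] at h4
        exact absurd h1 (by omega)
      · by_cases him : i = m
        · have e2 : ¬ (i + 1 < m) := by omega
          have e3 : ¬ (i + 1 = m) := by omega
          have e4 : i + 1 = m + 1 := by omega
          simp only [if_neg hi] at h2
          simp only [if_pos him] at h2
          simp only [if_neg hi1, if_neg e3, if_pos e4] at h4
          rw [if_neg hi, if_neg (show ¬ (i + 1 < m) from e2),
            show i - m = 0 by omega, show i + 1 - m = 1 by omega]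
          exact T.col_strict Nat.zero_lt_one
            (by rw [mem_twoRow l1 l2 hl]; right; exact ⟨rfl, by omega⟩)
        · -- i ≥ m + 1 : row i + 1 is empty
          have e2 : ¬ (i + 1 = m) := by omega
          have e3 : ¬ (i + 1 = m + 1) := by omega
          simp only [if_neg hi1, if_neg e2, if_neg e3] at h4
          exact absurd h4 (by omega)
  · -- zeros
    intro i j hnot
    rw [hlo, hlen] at hnot
    show E i j = 0
    simp only [hE]
    by_cases hi : i < m
    · simp only [if_pos hi] at hnot ⊢
      rw [if_neg hnot]
    · simp only [if_neg hi] at hnot ⊢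
      by_cases him : i = m
      · rw [him, Nat.sub_self]
        simp only [if_pos him] at hnot
        exact hz0 j (by omega)
      · by_cases him1 : i = m + 1
        · rw [show i - m = 1 by omega]
          simp only [if_neg him, if_pos him1] at hnot
          exact hz1 j (by omega)
        · exact hz2 (i - m) j (by omega)
  · -- the entry description
    intro i j h1 h2
    rw [hlo] at h1; rw [hlo, hlen] at h2
    show E i j = if i < m then i else T (i - m) j
    simp only [hE]
    by_cases hi : i < m
    · simp only [hi, if_pos] at h1 h2 ⊢
      rw [if_pos (show l1 ≤ j ∧ j < l1 + A i by omega)]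
    · simp only [hi, if_neg, if_false]
  · -- lattice
    show IsLattice _
    have key : ∀ (S : SkewTab (starLo l1 m) (starLen l1 l2 A m)), S.entry = E →
        IsLattice (readWord (starLo l1 m) (starLen l1 l2 A m) (L + 1) S) := by
      intro S hSE
      set f : ℕ → List ℕ := fun i =>
        (List.range (starLen l1 l2 A m i)).reverse.map (fun t => E i (starLo l1 m i + t)) with hf
      have hwords : readWord (starLo l1 m) (starLen l1 l2 A m) (L + 1) S =
          (List.range (m + 2)).flatMap f := by
        rw [readWord, show L + 1 = m + 2 by omega, hSE]
      -- row words
      have hfa : ∀ i, i < m → f i = List.replicate (A i) i := by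
        intro i hi
        rw [List.eq_replicate_iff]
        constructor
        · simp [hf, hlen, hi]
        · intro b hb
          simp only [hf, List.mem_map, List.mem_reverse, List.mem_range] at hb
          obtain ⟨t, ht, rfl⟩ := hb
          rw [hlen, if_pos hi] at ht
          rw [hlo, hE]
          simp only [if_pos hi]
          rw [if_pos (show l1 ≤ l1 + t ∧ l1 + t < l1 + A i by omega)]
      have hcount0 : ∀ u, (f m).count u = r0 u := by
        intro u
        rw [hf]
        simp only [hlenm, hlom]
        rw [lr_count_row, hr0]
        apply congrArg
        apply Finset.filter_congr
        intro t _
        simp only [hE]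
        rw [if_neg (Nat.lt_irrefl m), Nat.sub_self, Nat.zero_add]
      have hcount1 : ∀ u, (f (m + 1)).count u = r1 u := by
        intro u
        rw [hf]
        simp only [hlenm1, hlom1]
        rw [lr_count_row, hr1]
        apply congrArg
        apply Finset.filter_congr
        intro t _
        simp only [hE]
        rw [if_neg (show ¬ (m + 1 < m) by omega), show m + 1 - m = 1 by omega, Nat.zero_add]
      have hfe : f (m + 2) = [] := by
        rw [hf]
        simp only [hlen, if_neg (show ¬ (m + 2 < m) by omega),
          if_neg (show ¬ (m + 2 = m) by omega), if_neg (show ¬ (m + 2 = m + 1) by omega)]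
        simp
      have hsum_pref : ∀ i, i ≤ m → ∀ u, ∑ i' ∈ Finset.range i, (f i').count u =
          if u < i then A u else 0 := by
        intro i hi u
        rw [Finset.sum_congr rfl (fun i' hi' => show (f i').count u = if i' = u then A i' else 0
          from by
            rw [Finset.mem_range] at hi'
            rw [hfa i' (by omega), List.count_replicate]
            by_cases h : i' = u <;> simp [h])]
        rw [Finset.sum_ite_eq' (Finset.range i) u A]
        simp
      intro n v
      rw [hwords]
      obtain ⟨i, hi, k, hk, heq⟩ := lr_take_flatMap f (m + 2) n
      rw [heq, List.count_append, List.count_append, lr_count_flatMap, lr_count_flatMap]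
      have hAv := hAstep v
      have hmuv := hcont (v + 1)
      by_cases hile : i ≤ m
      · rw [hsum_pref i hile (v + 1), hsum_pref i hile v]
        by_cases hilt : i < m
        · rw [hfa i hilt] at hk ⊢
          simp only [List.length_replicate] at hk
          rw [List.take_replicate]
          have hc : ∀ u, (List.replicate (min k (A i)) i).count u =
              if u = i then min k (A i) else 0 := by
            intro u
            rw [List.count_replicate]
            by_cases h : u = i
            · rw [if_pos (by simp [h] : (i == u) = true), if_pos h]
            · rw [if_neg (by simp only [beq_iff_eq]; exact fun h' => h h'.symm : ¬ (i == u) = true), if_neg h]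
          rw [hc, hc]
          by_cases h1 : v + 1 = i
          · have hv : ¬ (v = i) := by omega
            rw [if_pos h1, if_neg hv]
            have e : A i = A (v + 1) := by rw [h1]
            split_ifs <;> omega
          · by_cases h2 : v = i
            · rw [if_neg h1, if_pos h2]
              have e : A i = A v := by rw [h2]
              split_ifs <;> omega
            · rw [if_neg h1, if_neg h2]
              split_ifs <;> omega
        · have him : i = m := by omega
          rw [him] at hk ⊢
          set i := m with hidef
          have c1 : (List.take k (f i)).count (v + 1) ≤ r0 (v + 1) := by
            rw [← hcount0]; exact (List.take_sublist k (f i)).count_le (v + 1)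
          have eA : ∀ u, (if u < i then A u else 0) = A u := by
            intro u
            by_cases h : u < i
            · rw [if_pos h]
            · rw [if_neg h, hAzero u (by omega)]
          rw [eA, eA]
          omega
      · by_cases hi1 : i = m + 1
        · subst hi1
          rw [Finset.sum_range_succ, Finset.sum_range_succ,
            hsum_pref m le_rfl (v + 1), hsum_pref m le_rfl v, hcount0, hcount0]
          have c1 : (List.take k (f (m + 1))).count (v + 1) ≤ r1 (v + 1) := by
            rw [← hcount1]; exact (List.take_sublist k (f (m + 1))).count_le (v + 1)
          have eA : ∀ u, (if u < m then A u else 0) = A u := by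
            intro u
            by_cases h : u < m
            · rw [if_pos h]
            · rw [if_neg h, hAzero u (by omega)]
          rw [eA, eA]
          omega
        · have hi2 : i = m + 2 := by omega
          subst hi2
          rw [hfe]
          simp only [List.take_nil, List.count_nil, Nat.add_zero]
          rw [Finset.sum_range_succ, Finset.sum_range_succ, Finset.sum_range_succ,
            Finset.sum_range_succ, hsum_pref m le_rfl (v + 1), hsum_pref m le_rfl v,
            hcount0, hcount0, hcount1, hcount1]
          have hmv := hcont v
          have eA : ∀ u, (if u < m then A u else 0) = A u := by
            intro u
            by_cases h : u < m
            · rw [if_pos h]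
            · rw [if_neg h, hAzero u (by omega)]
          rw [eA, eA]
          omega
    exact key _ rfl
  · -- content
    intro v
    have key : ∀ (S : SkewTab (starLo l1 m) (starLen l1 l2 A m)), S.entry = E →
        skewContent (starLo l1 m) (starLen l1 l2 A m) (L + 1) S v =
          ∑ w ∈ Finset.Ico v L, mu w := by
      intro S hSE
      rw [skewContent]
      have hrowa : ∀ i, i < m →
          rowContent (starLo l1 m) (starLen l1 l2 A m) S i v = if i = v then A i else 0 := by
        intro i hi
        rw [rowContent, hSE]
        simp only [hlo, hlen, if_pos hi]
        rw [Finset.filter_congr (fun j hj => show (E i j = v) ↔ (i = v) from by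
          rw [Finset.mem_Ico] at hj
          rw [hE]
          simp only [if_pos hi]
          rw [if_pos (show l1 ≤ j ∧ j < l1 + A i from hj)])]
        by_cases h : i = v
        · rw [if_pos h, Finset.filter_true_of_mem (fun _ _ => h), Nat.card_Ico]
          omega
        · rw [if_neg h, Finset.filter_false_of_mem (fun _ _ => h), Finset.card_empty]
      have hrow0 : rowContent (starLo l1 m) (starLen l1 l2 A m) S m v = r0 v := by
        rw [rowContent, hSE, hlom, hlenm, Nat.zero_add, ← Finset.range_eq_Ico, hr0]
        apply congrArg
        apply Finset.filter_congr
        intro t _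
        simp only [hE]
        rw [if_neg (Nat.lt_irrefl m), Nat.sub_self]
      have hrow1 : rowContent (starLo l1 m) (starLen l1 l2 A m) S (m + 1) v = r1 v := by
        rw [rowContent, hSE, hlom1, hlenm1, Nat.zero_add, ← Finset.range_eq_Ico, hr1]
        apply congrArg
        apply Finset.filter_congr
        intro t _
        simp only [hE]
        rw [if_neg (show ¬ (m + 1 < m) by omega), show m + 1 - m = 1 by omega]
      rw [show L + 1 = m + 2 by omega, Finset.sum_range_succ, Finset.sum_range_succ,
        hrow0, hrow1,
        Finset.sum_congr rfl (fun i hi => hrowa i (Finset.mem_range.mp hi)),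
        Finset.sum_ite_eq' (Finset.range m) v A]
      simp only [Finset.mem_range]
      have hcv := hcont v
      by_cases hv : v < L
      · rw [Finset.sum_eq_sum_Ico_succ_bot hv,
          show (∑ w ∈ Finset.Ico (v + 1) L, mu w) = A v from rfl]
        by_cases hv2 : v < m
        · rw [if_pos hv2]; omega
        · rw [if_neg hv2, hAzero v (by omega)]; omega
      · have h0 : Finset.Ico v L = ∅ := Finset.Ico_eq_empty (by omega)
        rw [h0, Finset.sum_empty, if_neg (by omega)]
        have := hmu v (by omega)
        omega
    exact key _ rfl
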